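/- Let a, b > 0 with a > b and let k : ℝ → (0,1) be the solution of the soliton ODE k' = k(1−k)((1−a/b)k + a/b). Then k(x) = C·e^((a/b)x) + o(e^((a/b)x)) as x → −∞ for some constant C > 0. -/

import Mathlib

open Filter Asymptotics

theorem stmt_13 (a b : ℝ) (hb : 0 < b) (hab : b < a) (k : ℝ → ℝ)
    (hk : ∀ x, k x ∈ Set.Ioo (0:ℝ) 1)
    (hode : ∀ x, HasDerivAt k (k x * (1 - k x) * ((1 - a / b) * k x + a / b)) x) :
    ∃ C : ℝ, 0 < C ∧
      (fun x => k x - C * Real.exp ((a / b) * x)) =o[atBot]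
        (fun x => Real.exp ((a / b) * x)) := by
  set μ := a / b with hμdef
  have hμ : 1 < μ := (one_lt_div hb).mpr hab
  have hkpos : ∀ x, 0 < k x := fun x => (hk x).1
  have hklt : ∀ x, k x < 1 := fun x => (hk x).2
  set g : ℝ → ℝ := fun x => k x * Real.exp (-μ * x) with hgdef
  have hgpos : ∀ x, 0 < g x := fun x => mul_pos (hkpos x) (Real.exp_pos _)
  have hg : ∀ x, HasDerivAt g
      (g x * (k x * ((1 - 2*μ) + (μ - 1) * k x))) x := by
    intro x
    have he : HasDerivAt (fun x => Real.exp (-μ * x)) (Real.exp (-μ * x) * (-μ)) x := by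
      simpa using ((hasDerivAt_id x).const_mul (-μ)).exp
    have := (hode x).fun_mul he
    refine this.congr_deriv ?_
    simp only [hgdef]
    ring
  -- g is antitone
  have hfac : ∀ x, (1 - 2*μ) + (μ - 1) * k x ≤ -μ := by
    intro x
    nlinarith [hklt x, hkpos x]
  have hgder_nonpos : ∀ x, g x * (k x * ((1 - 2*μ) + (μ - 1) * k x)) ≤ 0 := by
    intro x
    have h1 := hfac x
    have h2 : g x * (k x * ((1 - 2*μ) + (μ - 1) * k x)) = (g x * k x) * ((1 - 2*μ) + (μ - 1) * k x) := by ring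
    rw [h2]
    exact mul_nonpos_of_nonneg_of_nonpos (mul_pos (hgpos x) (hkpos x)).le (by linarith)
  have hganti : Antitone g := by
    refine antitone_of_deriv_nonpos (fun x => (hg x).differentiableAt) (fun x => ?_)
    rw [(hg x).deriv]; exact hgder_nonpos x
  -- k is monotone
  have hkder_pos : ∀ x, 0 < k x * (1 - k x) * ((1 - μ) * k x + μ) := by
    intro x
    have h1 : (1:ℝ) ≤ (1 - μ) * k x + μ := by nlinarith [hklt x, hkpos x]
    exact mul_pos (mul_pos (hkpos x) (by linarith [hklt x])) (by linarith)
  have hkmono : StrictMono k :=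
    strictMono_of_hasDerivAt_pos hode hkder_pos
  -- auxiliary monotone function on Iic 0
  set c : ℝ := 1 - k 0 with hcdef
  have hc : 0 < c := by simp [hcdef]; linarith [hklt 0]
  set β : ℝ := (2*μ - 1) / c with hβdef
  have hβ : 0 < β := div_pos (by linarith) hc
  set ψ : ℝ → ℝ := fun x => g x * Real.exp (β * k x) with hψdef
  have hψ : ∀ x, HasDerivAt ψ
      (g x * (k x * ((1 - 2*μ) + (μ - 1) * k x)) * Real.exp (β * k x)
        + g x * (Real.exp (β * k x) * (β * (k x * (1 - k x) * ((1 - μ) * k x + μ))))) x := by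
    intro x
    exact (hg x).mul ((((hode x).const_mul β)).exp)
  have hψdiff : Differentiable ℝ ψ := fun x => (hψ x).differentiableAt
  have hψder_nonneg : ∀ x ≤ (0:ℝ), 0 ≤ g x * (k x * ((1 - 2*μ) + (μ - 1) * k x)) * Real.exp (β * k x)
        + g x * (Real.exp (β * k x) * (β * (k x * (1 - k x) * ((1 - μ) * k x + μ)))) := by
    intro x hx
    have hk0 : k x ≤ k 0 := hkmono.monotone hx
    have hstuff : c ≤ (1 - k x) * ((1 - μ) * k x + μ) := by
      have h1 : (1:ℝ) ≤ (1 - μ) * k x + μ := by nlinarith [hklt x, hkpos x]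
      have h2 : c ≤ 1 - k x := by simp [hcdef]; linarith
      nlinarith [hkpos x, hklt x]
    -- key inequality: k*h + β*k' ≥ 0
    have hkey : 0 ≤ k x * ((1 - 2*μ) + (μ - 1) * k x)
        + β * (k x * (1 - k x) * ((1 - μ) * k x + μ)) := by
      have hβc : β * c = 2*μ - 1 := div_mul_cancel₀ _ (ne_of_gt hc)
      have h3 : β * (k x * (1 - k x) * ((1 - μ) * k x + μ)) ≥ (2*μ - 1) * k x := by
        have := mul_le_mul_of_nonneg_left hstuff (le_of_lt (mul_pos hβ (hkpos x)))
        nlinarith [hkpos x]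
      have h4 : k x * ((1 - 2*μ) + (μ - 1) * k x) ≥ -((2*μ - 1) * k x) := by
        nlinarith [mul_nonneg (sq_nonneg (k x)) (by linarith : (0:ℝ) ≤ μ - 1)]
      linarith
    have hE : (0:ℝ) < Real.exp (β * k x) := Real.exp_pos _
    have := mul_le_mul_of_nonneg_left hkey (le_of_lt (mul_pos (hgpos x) hE))
    nlinarith [this]
  have hψmono : MonotoneOn ψ (Set.Iic 0) := by
    refine monotoneOn_of_deriv_nonneg (convex_Iic 0) hψdiff.continuous.continuousOn
      hψdiff.differentiableOn (fun x hx => ?_)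
    rw [(hψ x).deriv]
    exact hψder_nonneg x (le_of_lt (by simpa using hx))
  -- g is bounded above
  have hbdd : BddAbove (Set.range g) := by
    refine ⟨max (ψ 0) (g 0), ?_⟩
    rintro _ ⟨x, rfl⟩
    rcases le_total x 0 with hx | hx
    · have h1 : g x ≤ ψ x := by
        have : (1:ℝ) ≤ Real.exp (β * k x) :=
          Real.one_le_exp (mul_nonneg hβ.le (hkpos x).le)
        simpa [hψdef] using mul_le_mul_of_nonneg_left this (hgpos x).le
      have h2 : ψ x ≤ ψ 0 := hψmono hx (le_refl (0:ℝ)) hx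
      exact le_trans (le_trans h1 h2) (le_max_left _ _)
    · exact le_trans (hganti hx) (le_max_right _ _)
  set C : ℝ := ⨆ x, g x with hCdef
  have htend : Tendsto g atBot (nhds C) := tendsto_atBot_ciSup hganti hbdd
  have hCpos : 0 < C := lt_of_lt_of_le (hgpos 0) (le_ciSup hbdd 0)
  refine ⟨C, hCpos, ?_⟩
  rw [isLittleO_iff_tendsto' (Eventually.of_forall fun x hx =>
    absurd hx (Real.exp_ne_zero _))]
  have h0 : Tendsto (fun x => g x - C) atBot (nhds 0) := by
    simpa using htend.sub_const C
  refine h0.congr (fun x => ?_)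
  have hexp : Real.exp (μ * x) ≠ 0 := Real.exp_ne_zero _
  field_simp [hgdef]
  rw [sub_mul, mul_assoc, ← Real.exp_add, neg_mul, neg_add_cancel, Real.exp_zero, mul_one]
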